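/- arXiv:2506.13375 — 4 statements merged into one kernel-verified Lean document; each statement's English description precedes it below -/
import Mathlib

section
/- Let a(n,k) be the coefficient of x^k in F_n(x) = ∏_{i=0}^{n-1}(1 + x^{2^i} + x^{2^{i+1}}), and let ν(n) = Σ_k a(n,k)^2. Then the sequence ν satisfies ν(0) = 1, ν(1) = 3, and ν(n+2) = 5ν(n+1) − 2ν(n) for all n ≥ 0. -/
/-- Integer-indexed coefficient function of `F n`. -/
def aa : ℕ → ℤ → ℤ
  | 0, k => if k = 0 then 1 else 0
  | n+1, k => aa n k + aa n (k - 2^n) + aa n (k - 2^(n+1))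

lemma aa_neg (n : ℕ) (k : ℤ) (hk : k < 0) : aa n k = 0 := by
  induction n generalizing k with
  | zero => simp [aa]; omega
  | succ n ih =>
    have h0 : (0:ℤ) < 2^n := by positivity
    have h1 : (0:ℤ) < 2^(n+1) := by positivity
    simp only [aa, ih k hk, ih (k - 2^n) (by linarith), ih (k - 2^(n+1)) (by linarith)]
    ring

lemma aa_big (n : ℕ) (k : ℤ) (hk : 2^(n+1) - 1 ≤ k) : aa n k = 0 := by
  induction n generalizing k with
  | zero => simp [aa]; omega
  | succ n ih =>
    have h0 : (0:ℤ) < 2^n := by positivity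
    have e1 : (2:ℤ)^(n+1) = 2 * 2^n := by ring
    have e2 : (2:ℤ)^(n+2) = 4 * 2^n := by ring
    rw [e2] at hk
    simp only [aa, ih k (by rw [e1]; linarith), ih (k - 2^n) (by rw [e1]; linarith),
      ih (k - 2^(n+1)) (by rw [e1] at *; linarith)]
    ring

lemma sum_congr_support (f : ℤ → ℤ) (s t : Finset ℤ)
    (h : ∀ k ∈ s, k ∉ t → f k = 0) (h' : ∀ k ∈ t, k ∉ s → f k = 0) :
    ∑ k ∈ s, f k = ∑ k ∈ t, f k := by
  have hs : ∑ k ∈ s, f k = ∑ k ∈ s ∩ t, f k := by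
    refine (Finset.sum_subset Finset.inter_subset_left ?_).symm
    intro k hk hk'
    exact h k hk (fun ht => hk' (Finset.mem_inter.mpr ⟨hk, ht⟩))
  have ht : ∑ k ∈ t, f k = ∑ k ∈ t ∩ s, f k := by
    refine (Finset.sum_subset Finset.inter_subset_left ?_).symm
    intro k hk hk'
    exact h' k hk (fun hs2 => hk' (Finset.mem_inter.mpr ⟨hk, hs2⟩))
  rw [hs, ht, Finset.inter_comm]

/-- Shifted autocorrelation sums. -/
noncomputable def CC (n : ℕ) (e : ℤ) : ℤ := ∑ k ∈ Finset.Icc (0:ℤ) (2^(n+1)), aa n k * aa n (k + e)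

lemma CC_big (n : ℕ) (e : ℤ) (he : 2^(n+1) - 1 ≤ e) : CC n e = 0 := by
  refine Finset.sum_eq_zero fun k hk => ?_
  rcases lt_or_ge k 0 with h | h
  · rw [aa_neg n k h, zero_mul]
  · rw [aa_big n (k + e) (by linarith), mul_zero]

lemma sum_shift (n : ℕ) (t e : ℤ) (s : Finset ℤ)
    (hs : ∀ k : ℤ, 0 ≤ k → k ≤ 2^(n+1) → k - t ∈ s) :
    ∑ k ∈ s, aa n (k + t) * aa n (k + t + e) = CC n e := by
  have hmap : ∑ k ∈ s.map (addRightEmbedding t), aa n k * aa n (k + e)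
      = ∑ k ∈ s, aa n (k + t) * aa n (k + t + e) := by
    rw [Finset.sum_map]
    rfl
  rw [← hmap, CC]
  apply sum_congr_support
  · intro k _ hk'
    simp only [Finset.mem_Icc, not_and, not_le] at hk'
    rcases lt_or_ge k 0 with h | h
    · rw [aa_neg n k h, zero_mul]
    · rw [aa_big n k (by have := hk' h; linarith), zero_mul]
  · intro k hk hk'
    exfalso
    apply hk'
    simp only [Finset.mem_Icc] at hk
    simp only [Finset.mem_map, addRightEmbedding_apply]
    exact ⟨k - t, hs k hk.1 hk.2, by ring⟩

lemma CC_symm (n : ℕ) (e : ℤ) : CC n (-e) = CC n e := by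
  have hmap : ∑ k ∈ (Finset.Icc (0:ℤ) (2^(n+1))).map (addRightEmbedding e),
      aa n (k - e) * aa n k = ∑ k ∈ Finset.Icc (0:ℤ) (2^(n+1)), aa n k * aa n (k + e) := by
    rw [Finset.sum_map]
    refine Finset.sum_congr rfl fun k _ => ?_
    simp only [addRightEmbedding_apply]
    rw [show k + e - e = k by ring]
  have hset : (Finset.Icc (0:ℤ) (2^(n+1))).map (addRightEmbedding e)
      = Finset.Icc (e:ℤ) (2^(n+1) + e) := by
    ext k
    simp only [Finset.mem_map, addRightEmbedding_apply, Finset.mem_Icc]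
    constructor
    · rintro ⟨m, hm, rfl⟩; omega
    · rintro ⟨h1, h2⟩; exact ⟨k - e, by omega, by ring⟩
  have key : ∑ k ∈ Finset.Icc (e:ℤ) (2^(n+1) + e), aa n (k - e) * aa n k
      = ∑ k ∈ Finset.Icc (0:ℤ) (2^(n+1)), aa n (k - e) * aa n k := by
    apply sum_congr_support
    · intro k _ hk'
      simp only [Finset.mem_Icc, not_and, not_le] at hk'
      rcases lt_or_ge k 0 with h | h
      · rw [aa_neg n k h, mul_zero]
      · rw [aa_big n k (by have := hk' h; linarith), mul_zero]
    · intro k _ hk'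
      simp only [Finset.mem_Icc, not_and, not_le] at hk'
      rcases lt_or_ge k e with h | h
      · rw [aa_neg n (k - e) (by linarith), zero_mul]
      · rw [aa_big n (k - e) (by have := hk' h; linarith), zero_mul]
  rw [CC, CC, ← hmap, hset, key]
  refine Finset.sum_congr rfl fun k _ => ?_
  rw [show k + -e = k - e by ring, mul_comm]

lemma row0 (n : ℕ) (e : ℤ) (s : Finset ℤ)
    (hs : ∀ k : ℤ, 0 ≤ k → k ≤ 2^(n+1) → k ∈ s) :
    ∑ k ∈ s, aa n k * aa n (k + e) = CC n e := by
  rw [CC]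
  apply sum_congr_support
  · intro k _ hk'
    simp only [Finset.mem_Icc, not_and, not_le] at hk'
    rcases lt_or_ge k 0 with h | h
    · rw [aa_neg n k h, zero_mul]
    · rw [aa_big n k (by have := hk' h; linarith), zero_mul]
  · intro k hk hk'
    simp only [Finset.mem_Icc] at hk
    exact absurd (hs k hk.1 hk.2) hk'

lemma rowm (n : ℕ) (c e : ℤ) (s : Finset ℤ)
    (hs : ∀ k : ℤ, 0 ≤ k → k ≤ 2^(n+1) → k + c ∈ s) :
    ∑ k ∈ s, aa n (k - c) * aa n (k + e) = CC n (e + c) := by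
  rw [← sum_shift n (-c) (e + c) s (fun k h1 h2 => by
    have := hs k h1 h2; rwa [show k - -c = k + c by ring])]
  refine Finset.sum_congr rfl fun k _ => ?_
  rw [show k + -c + (e + c) = k + e by ring, show k + -c = k - c by ring]

lemma CC_succ (n : ℕ) (e : ℤ) :
    CC (n+1) e = 3 * CC n e + 2 * CC n (e + 2^n) + 2 * CC n (e - 2^n)
      + CC n (e + 2^(n+1)) + CC n (e - 2^(n+1)) := by
  have h0 : (0:ℤ) < 2^n := by positivity
  have e1 : (2:ℤ)^(n+1) = 2 * 2^n := by ring
  have e2 : (2:ℤ)^(n+2) = 4 * 2^n := by ring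
  set s : Finset ℤ := Finset.Icc (0:ℤ) (2^(n+2)) with hsdef
  have hmem : ∀ k : ℤ, 0 ≤ k → k ≤ 2^(n+1) → ∀ c : ℤ, 0 ≤ c → c ≤ 2^(n+1) → k + c ∈ s := by
    intro k h1 h2 c hc1 hc2
    rw [hsdef, Finset.mem_Icc]
    constructor <;> [linarith; (rw [e2]; rw [e1] at h2 hc2; linarith)]
  have hs0 : ∀ k : ℤ, 0 ≤ k → k ≤ 2^(n+1) → k ∈ s := by
    intro k h1 h2
    have := hmem k h1 h2 0 le_rfl (by linarith)
    simpa using this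
  have hs1 : ∀ k : ℤ, 0 ≤ k → k ≤ 2^(n+1) → k + 2^n ∈ s :=
    fun k h1 h2 => hmem k h1 h2 (2^n) (by linarith) (by rw [e1]; linarith)
  have hs2 : ∀ k : ℤ, 0 ≤ k → k ≤ 2^(n+1) → k + 2^(n+1) ∈ s :=
    fun k h1 h2 => hmem k h1 h2 (2^(n+1)) (by rw [e1]; linarith) le_rfl
  have expand : CC (n+1) e = ∑ k ∈ s,
      (aa n k * aa n (k + e) + aa n k * aa n (k + (e - 2^n))
        + aa n k * aa n (k + (e - 2^(n+1)))
        + aa n (k - 2^n) * aa n (k + e) + aa n (k - 2^n) * aa n (k + (e - 2^n))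
        + aa n (k - 2^n) * aa n (k + (e - 2^(n+1)))
        + aa n (k - 2^(n+1)) * aa n (k + e) + aa n (k - 2^(n+1)) * aa n (k + (e - 2^n))
        + aa n (k - 2^(n+1)) * aa n (k + (e - 2^(n+1)))) := by
    rw [CC]
    refine Finset.sum_congr rfl fun k _ => ?_
    simp only [aa]
    rw [show k + e - 2^n = k + (e - 2^n) by ring,
      show k + e - 2^(n+1) = k + (e - 2^(n+1)) by ring]
    ring
  rw [expand]
  simp only [Finset.sum_add_distrib]
  rw [row0 n e s hs0, row0 n (e - 2^n) s hs0, row0 n (e - 2^(n+1)) s hs0,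
    rowm n (2^n) e s hs1, rowm n (2^n) (e - 2^n) s hs1, rowm n (2^n) (e - 2^(n+1)) s hs1,
    rowm n (2^(n+1)) e s hs2, rowm n (2^(n+1)) (e - 2^n) s hs2,
    rowm n (2^(n+1)) (e - 2^(n+1)) s hs2]
  rw [show e - 2^n + 2^n = e by ring, show e - 2^(n+1) + 2^n = e - 2^n by rw [e1]; ring,
    show e - 2^n + 2^(n+1) = e + 2^n by rw [e1]; ring, show e - 2^(n+1) + 2^(n+1) = e by ring]
  ring

open Polynomial in
lemma coeff_F (n : ℕ) (j : ℕ) :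
    (∏ i ∈ Finset.range n, (1 + (X : ℤ[X]) ^ (2 ^ i) + X ^ (2 ^ (i + 1)))).coeff j
      = aa n (j : ℤ) := by
  induction n generalizing j with
  | zero =>
    simp [aa, Polynomial.coeff_one]
  | succ n ih =>
    rw [Finset.prod_range_succ, mul_add, mul_add, mul_one, Polynomial.coeff_add,
      Polynomial.coeff_add, Polynomial.coeff_mul_X_pow', Polynomial.coeff_mul_X_pow']
    simp only [aa]
    have cast1 : ((2^n : ℕ) : ℤ) = 2^n := by push_cast; ring
    have cast2 : ((2^(n+1) : ℕ) : ℤ) = 2^(n+1) := by push_cast; ring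
    congr 1
    · congr 1
      · exact ih j
      · split_ifs with h
        · rw [ih (j - 2^n), Nat.cast_sub h, cast1]
        · refine (aa_neg n _ ?_).symm
          push_neg at h
          have hj : (j:ℤ) < 2^n := by exact_mod_cast h
          linarith
    · split_ifs with h
      · rw [ih (j - 2^(n+1)), Nat.cast_sub h, cast2]
      · refine (aa_neg n _ ?_).symm
        push_neg at h
        have hj : (j:ℤ) < 2^(n+1) := by exact_mod_cast h
        linarith

lemma sum_nat_cast (N : ℕ) (f : ℤ → ℤ) :
    ∑ k ∈ Finset.Icc (0:ℤ) (N:ℤ), f k = ∑ k ∈ Finset.range (N+1), f k := by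
  have hset : Finset.Icc (0:ℤ) (N:ℤ)
      = (Finset.range (N+1)).map ⟨(↑· : ℕ → ℤ), Nat.cast_injective⟩ := by
    ext k
    simp only [Finset.mem_map, Finset.mem_Icc, Finset.mem_range, Function.Embedding.coeFn_mk]
    constructor
    · rintro ⟨h0, hN⟩; exact ⟨k.toNat, by omega, by omega⟩
    · rintro ⟨m, hm, rfl⟩; omega
  rw [hset, Finset.sum_map]
  rfl

open Polynomial in
theorem stmt_4 (F : ℕ → ℤ[X]) (ν : ℕ → ℤ)
    (hF : ∀ n, F n = ∏ i ∈ Finset.range n, (1 + (X : ℤ[X]) ^ (2 ^ i) + X ^ (2 ^ (i + 1))))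
    (hν : ∀ n, ν n = ∑ k ∈ (F n).support, ((F n).coeff k) ^ 2) :
    ν 0 = 1 ∧ ν 1 = 3 ∧ ∀ n, ν (n + 2) = 5 * ν (n + 1) - 2 * ν n := by
  have hcoeff : ∀ n (j : ℕ), (F n).coeff j = aa n (j : ℤ) := by
    intro n j; rw [hF n]; exact coeff_F n j
  have hlink : ∀ n, ν n = CC n 0 := by
    intro n
    have cast2 : ((2^(n+1) : ℕ) : ℤ) = 2^(n+1) := by push_cast; ring
    have step1 : ν n = ∑ k ∈ Finset.range (2^(n+1) + 1), ((F n).coeff k) ^ 2 := by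
      rw [hν n]
      apply Finset.sum_subset
      · intro k hk
        rw [Finset.mem_range]
        by_contra h
        push_neg at h
        apply Polynomial.mem_support_iff.mp hk
        rw [hcoeff]
        apply aa_big
        have : ((2^(n+1) : ℕ) : ℤ) ≤ (k : ℤ) := by exact_mod_cast Nat.le_of_succ_le h
        rw [cast2] at this
        linarith
      · intro k _ hk
        rw [Polynomial.notMem_support_iff.mp hk]
        ring
    have step2 : CC n 0 = ∑ k ∈ Finset.range (2^(n+1) + 1), ((F n).coeff k) ^ 2 := by
      have unf : CC n 0 = ∑ k ∈ Finset.Icc (0:ℤ) (2^(n+1)), aa n k * aa n (k + 0) := rfl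
      rw [unf, show ((2:ℤ)^(n+1)) = ((2^(n+1) : ℕ) : ℤ) from cast2.symm,
        sum_nat_cast (2^(n+1)) (fun k => aa n k * aa n (k + 0))]
      refine Finset.sum_congr rfl fun k _ => ?_
      rw [hcoeff, add_zero]
      ring
    rw [step1, step2]
  have hrec : ∀ n, CC (n+1) 0 = 3 * CC n 0 + 4 * CC n (2^n) := by
    intro n
    have h0 : (0:ℤ) < 2^n := by positivity
    have e1 : (2:ℤ)^(n+1) = 2 * 2^n := by ring
    have b1 : CC n (2^(n+1)) = 0 := CC_big n _ (by linarith)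
    rw [CC_succ n 0, zero_add, zero_sub, zero_add, zero_sub, CC_symm n (2^n),
      CC_symm n (2^(n+1)), b1]
    ring
  have htop : ∀ n, CC (n+1) (2^(n+1)) = CC n 0 + 2 * CC n (2^n) := by
    intro n
    have h0 : (0:ℤ) < 2^n := by positivity
    have e1 : (2:ℤ)^(n+1) = 2 * 2^n := by ring
    have b1 : CC n (2^(n+1)) = 0 := CC_big n _ (by linarith)
    have b2 : CC n (2^(n+1) + 2^n) = 0 := CC_big n _ (by linarith)
    have b3 : CC n (2^(n+1) + 2^(n+1)) = 0 := CC_big n _ (by linarith)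
    rw [CC_succ n (2^(n+1)), show (2:ℤ)^(n+1) - 2^n = 2^n by rw [e1]; ring,
      sub_self, b1, b2, b3]
    ring
  refine ⟨?_, ?_, ?_⟩
  · rw [hlink 0]; decide
  · rw [hlink 1]; decide
  · intro n
    have h1 := hrec n
    have h2 := hrec (n+1)
    have h3 := htop n
    rw [← hlink n, ← hlink (n+1)] at h1
    rw [← hlink (n+1), ← hlink (n+2)] at h2
    rw [h3, ← hlink n] at h2
    linarith [hlink n, h1, h2]
end

section
/- Let ν(n) be the sum of the squares of the coefficients of F_n(x) = ∏_{i=0}^{n-1}(1 + x^{2^i} + x^{2^{i+1}}). Then the generating function identity Σ_{n≥0} ν(n) x^n = (1 − 2x)/(1 − 5x + 2x^2) holds as an equality of formal power series over the rationals. -/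
open Polynomial Finset

private lemma sum_range_two_mul (f : ℕ → ℚ) (N : ℕ) :
    ∑ k ∈ Finset.range (2*N), f k = ∑ m ∈ Finset.range N, (f (2*m) + f (2*m+1)) := by
  induction N with
  | zero => simp
  | succ n ih =>
      have h : 2*(n+1) = (2*n+1)+1 := by ring
      rw [h, Finset.sum_range_succ, Finset.sum_range_succ, ih, Finset.sum_range_succ]
      ring

private lemma coeffP (g : ℚ[X]) (k : ℕ) :
    ((Polynomial.expand ℚ 2 g) * (1 + X + X^2)).coeff k
      = (Polynomial.expand ℚ 2 g).coeff k
        + (if 1 ≤ k then (Polynomial.expand ℚ 2 g).coeff (k-1) else 0)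
        + (if 2 ≤ k then (Polynomial.expand ℚ 2 g).coeff (k-2) else 0) := by
  have h : (Polynomial.expand ℚ 2 g) * (1 + X + X^2)
      = (Polynomial.expand ℚ 2 g) + (Polynomial.expand ℚ 2 g) * X^1
        + (Polynomial.expand ℚ 2 g) * X^2 := by ring
  rw [h, Polynomial.coeff_add, Polynomial.coeff_add, Polynomial.coeff_mul_X_pow',
    Polynomial.coeff_mul_X_pow']

private lemma coeff_odd (g : ℚ[X]) (m : ℕ) :
    ((Polynomial.expand ℚ 2 g) * (1 + X + X^2)).coeff (2*m+1) = g.coeff m := by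
  rw [coeffP]
  have h2 : (0:ℕ) < 2 := by norm_num
  rcases m with _ | m
  · simp [Polynomial.coeff_expand h2]
  · have e1 : 2*(m+1)+1-1 = 2*(m+1) := by omega
    have e2 : 2*(m+1)+1-2 = 2*m+1 := by omega
    have d1 : ¬ (2 ∣ 2*(m+1)+1) := by omega
    have d2 : (2:ℕ) ∣ 2*(m+1) := ⟨m+1, rfl⟩
    have d3 : ¬ (2 ∣ 2*m+1) := by omega
    rw [e1, e2] at *
    simp [Polynomial.coeff_expand h2, d1, d2, d3, Nat.mul_div_cancel_left]

private lemma coeff_even (g : ℚ[X]) (m : ℕ) :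
    ((Polynomial.expand ℚ 2 g) * (1 + X + X^2)).coeff (2*m)
      = g.coeff m + (if m = 0 then 0 else g.coeff (m-1)) := by
  rw [coeffP]
  have h2 : (0:ℕ) < 2 := by norm_num
  rcases m with _ | m
  · simp [Polynomial.coeff_expand h2]
  · have e1 : 2*(m+1)-1 = 2*m+1 := by omega
    have e2 : 2*(m+1)-2 = 2*m := by omega
    have d1 : (2:ℕ) ∣ 2*(m+1) := ⟨m+1, rfl⟩
    have d2 : ¬ (2 ∣ 2*m+1) := by omega
    have d3 : (2:ℕ) ∣ 2*m := ⟨m, rfl⟩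
    rw [e1, e2]
    simp [Polynomial.coeff_expand h2, d1, d2, d3, Nat.mul_div_cancel_left]

private lemma alg1 (B : ℕ → ℚ) (N : ℕ) (hN : B N = 0) :
    ∑ m ∈ Finset.range (N+1),
      ((B m + (if m = 0 then 0 else B (m-1)))^2 + B m ^ 2)
    = 3 * (∑ m ∈ Finset.range (N+1), B m ^ 2)
      + 2 * ∑ m ∈ Finset.range (N+1), B m * B (m+1) := by
  rw [Finset.sum_add_distrib]
  have e1 : ∑ m ∈ Finset.range (N+1), (B m + (if m = 0 then 0 else B (m-1)))^2
      = ∑ m ∈ Finset.range N, (B (m+1) + B m)^2 + (B 0)^2 := by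
    rw [Finset.sum_range_succ' (fun m => (B m + (if m = 0 then 0 else B (m-1)))^2)]
    simp
  have e2 : ∑ m ∈ Finset.range N, (B (m+1) + B m)^2
      = ∑ m ∈ Finset.range N, B (m+1)^2 + 2 * ∑ m ∈ Finset.range N, (B m * B (m+1))
        + ∑ m ∈ Finset.range N, B m ^2 := by
    rw [Finset.mul_sum, ← Finset.sum_add_distrib, ← Finset.sum_add_distrib]
    exact Finset.sum_congr rfl (fun m _ => by ring)
  have e3 : ∑ m ∈ Finset.range (N+1), B m ^ 2
      = ∑ m ∈ Finset.range N, B (m+1)^2 + (B 0)^2 :=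
    Finset.sum_range_succ' (fun m => B m ^ 2) N
  have e4 : ∑ m ∈ Finset.range (N+1), B m ^ 2
      = ∑ m ∈ Finset.range N, B m ^ 2 + (B N)^2 :=
    Finset.sum_range_succ (fun m => B m ^ 2) N
  have e5 : ∑ m ∈ Finset.range (N+1), B m * B (m+1)
      = ∑ m ∈ Finset.range N, B m * B (m+1) + B N * B (N+1) :=
    Finset.sum_range_succ (fun m => B m * B (m+1)) N
  rw [e1, e2]
  rw [hN] at e4 e5
  linarith

private lemma alg2 (B : ℕ → ℚ) (N : ℕ) (hN : B N = 0) :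
    ∑ m ∈ Finset.range (N+1),
      ((B m + (if m = 0 then 0 else B (m-1))) * B m + B m * (B (m+1) + B m))
    = 2 * (∑ m ∈ Finset.range (N+1), B m ^ 2)
      + 2 * ∑ m ∈ Finset.range (N+1), B m * B (m+1) := by
  have e0 : ∀ m, (B m + (if m = 0 then 0 else B (m-1))) * B m + B m * (B (m+1) + B m)
      = (if m = 0 then 0 else B (m-1)) * B m + (B m * B (m+1) + 2 * B m ^ 2) := by
    intro m; ring
  rw [Finset.sum_congr rfl (fun m _ => e0 m), Finset.sum_add_distrib]
  have e1 : ∑ m ∈ Finset.range (N+1), (if m = 0 then 0 else B (m-1)) * B m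
      = ∑ m ∈ Finset.range N, B m * B (m+1) := by
    rw [Finset.sum_range_succ' (fun m => (if m = 0 then 0 else B (m-1)) * B m)]
    simp
  have e5 : ∑ m ∈ Finset.range (N+1), B m * B (m+1)
      = ∑ m ∈ Finset.range N, B m * B (m+1) + B N * B (N+1) :=
    Finset.sum_range_succ (fun m => B m * B (m+1)) N
  rw [hN] at e5
  rw [e1, Finset.sum_add_distrib, Finset.mul_sum]
  have := Finset.mul_sum (Finset.range (N+1)) (fun m => B m ^2) (2:ℚ)
  linarith [this]

theorem stmt_5 (F : ℕ → Polynomial ℚ) (ν : ℕ → ℚ)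
    (hF : ∀ n, F n = ∏ i ∈ Finset.range n,
      (1 + (Polynomial.X : Polynomial ℚ) ^ (2 ^ i) + Polynomial.X ^ (2 ^ (i + 1))))
    (hν : ∀ n, ν n = ∑ k ∈ (F n).support, ((F n).coeff k) ^ 2) :
    PowerSeries.mk ν =
      (1 - 2 * PowerSeries.X) *
        (1 - 5 * PowerSeries.X + 2 * PowerSeries.X ^ 2 : PowerSeries ℚ)⁻¹ := by
  have h2pow : ∀ n : ℕ, 2 ≤ 2^(n+1) := by
    intro n
    have : (2:ℕ)^1 ≤ 2^(n+1) := Nat.pow_le_pow_right (by norm_num) (by omega)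
    simpa using this
  -- degree bound
  have hfac : ∀ i : ℕ, (1 + X^(2^i) + X^(2^(i+1)) : ℚ[X]).natDegree ≤ 2^(i+1) := by
    intro i
    have hle : (2:ℕ)^i ≤ 2^(i+1) := Nat.pow_le_pow_right (by norm_num) (by omega)
    have h1 : (1 + X^(2^i) : ℚ[X]).natDegree ≤ 2^(i+1) := by
      refine le_trans (Polynomial.natDegree_add_le _ _) ?_
      simp [Polynomial.natDegree_X_pow, hle]
    refine le_trans (Polynomial.natDegree_add_le _ _) ?_
    simp [Polynomial.natDegree_X_pow, h1]
  have hgeo : ∀ n : ℕ, ∑ i ∈ Finset.range n, 2^(i+1) = 2^(n+1) - 2 := by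
    intro n
    induction n with
    | zero => simp
    | succ n ih =>
        rw [Finset.sum_range_succ, ih]
        have h1 : (2:ℕ)^(n+1+1) = 2*2^(n+1) := by ring
        have h2 := h2pow n
        omega
  have hvanish : ∀ n k, 2^(n+1) - 2 < k → (F n).coeff k = 0 := by
    intro n k hk
    apply Polynomial.coeff_eq_zero_of_natDegree_lt
    calc (F n).natDegree
        ≤ ∑ i ∈ Finset.range n, (1 + X^(2^i) + X^(2^(i+1)) : ℚ[X]).natDegree := by
          rw [hF]; exact Polynomial.natDegree_prod_le _ _
      _ ≤ ∑ i ∈ Finset.range n, 2^(i+1) := Finset.sum_le_sum (fun i _ => hfac i)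
      _ = 2^(n+1) - 2 := hgeo n
      _ < k := hk
  have hν' : ∀ n, ν n = ∑ k ∈ Finset.range (2^(n+1)), (F n).coeff k ^ 2 := by
    intro n
    rw [hν]
    apply Finset.sum_subset
    · intro k hk
      rw [Finset.mem_range]
      by_contra h
      push_neg at h
      have h0 := h2pow n
      exact (Polynomial.mem_support_iff.mp hk) (hvanish n k (by omega))
    · intro k _ hk
      rw [Polynomial.notMem_support_iff.mp hk]; ring
  set s : ℕ → ℚ :=
    fun n => ∑ k ∈ Finset.range (2^(n+1)), (F n).coeff k * (F n).coeff (k+1) with hsdef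
  have hstep : ∀ n, F (n+1) = (Polynomial.expand ℚ 2 (F n)) * (1 + X + X^2) := by
    intro n
    rw [hF (n+1),
      Finset.prod_range_succ' (fun i => (1 + X^(2^i) + X^(2^(i+1)) : ℚ[X])) n, hF n]
    congr 1
    · rw [map_prod]
      apply Finset.prod_congr rfl
      intro i _
      rw [map_add, map_add, map_one, map_pow, map_pow, Polynomial.expand_X,
        ← pow_mul, ← pow_mul]
      have e1 : 2 * 2^i = 2^(i+1) := by ring
      have e2 : 2 * 2^(i+1) = 2^(i+1+1) := by ring
      rw [e1, e2]
    · norm_num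
  have key1 : ∀ n, ν (n+1) = 3 * ν n + 2 * s n := by
    intro n
    have hNeq : (2:ℕ)^(n+1+1) = 2 * 2^(n+1) := by ring
    rw [hν' (n+1), hNeq, sum_range_two_mul]
    have hco : ∀ m, (F (n+1)).coeff (2*m) ^ 2 + (F (n+1)).coeff (2*m+1) ^ 2
        = ((F n).coeff m + (if m = 0 then 0 else (F n).coeff (m-1)))^2
          + (F n).coeff m ^ 2 := by
      intro m
      rw [hstep n, coeff_even, coeff_odd]
    rw [Finset.sum_congr rfl (fun m _ => hco m)]
    obtain ⟨N, hN⟩ : ∃ N, 2^(n+1) = N + 1 := ⟨2^(n+1) - 1, by have := h2pow n; omega⟩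
    have hNz : (F n).coeff N = 0 := hvanish n N (by have := h2pow n; omega)
    rw [hN, alg1 _ N hNz, hν' n, hsdef]
    simp only [hN]
  have key2 : ∀ n, s (n+1) = 2 * ν n + 2 * s n := by
    intro n
    have hNeq : (2:ℕ)^(n+1+1) = 2 * 2^(n+1) := by ring
    rw [hsdef]
    simp only
    rw [hNeq, sum_range_two_mul
      (fun k => (F (n+1)).coeff k * (F (n+1)).coeff (k+1))]
    have hco : ∀ m,
        (F (n+1)).coeff (2*m) * (F (n+1)).coeff (2*m+1)
          + (F (n+1)).coeff (2*m+1) * (F (n+1)).coeff (2*m+1+1)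
        = ((F n).coeff m + (if m = 0 then 0 else (F n).coeff (m-1))) * (F n).coeff m
          + (F n).coeff m * ((F n).coeff (m+1) + (F n).coeff m) := by
      intro m
      have e : 2*m+1+1 = 2*(m+1) := by ring
      rw [hstep n, e, coeff_even, coeff_odd, coeff_even]
      simp
    rw [Finset.sum_congr rfl (fun m _ => hco m)]
    obtain ⟨N, hN⟩ : ∃ N, 2^(n+1) = N + 1 := ⟨2^(n+1) - 1, by have := h2pow n; omega⟩
    have hNz : (F n).coeff N = 0 := hvanish n N (by have := h2pow n; omega)
    rw [hN, alg2 _ N hNz, hν' n]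
    simp only [hN]
  have hν0 : ν 0 = 1 := by
    rw [hν' 0, hF 0]
    norm_num [Finset.sum_range_succ, Polynomial.coeff_one]
  have hs0 : s 0 = 0 := by
    rw [hsdef]
    simp only
    rw [hF 0]
    norm_num [Finset.sum_range_succ, Polynomial.coeff_one]
  have hν1 : ν 1 = 3 := by
    have := key1 0
    rw [hν0, hs0] at this
    linarith
  have hrec : ∀ n, ν (n+2) = 5 * ν (n+1) - 2 * ν n := by
    intro n
    have k1 := key1 n
    have k2 := key2 n
    have k1' := key1 (n+1)
    linarith
  have h5 : (5 : PowerSeries ℚ) = PowerSeries.C (R := ℚ) 5 := by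
    simpa using (map_ofNat (PowerSeries.C (R := ℚ)) 5).symm
  have h2' : (2 : PowerSeries ℚ) = PowerSeries.C (R := ℚ) 2 := by
    simpa using (map_ofNat (PowerSeries.C (R := ℚ)) 2).symm
  rw [PowerSeries.eq_mul_inv_iff_mul_eq (by simp)]
  have hmul : PowerSeries.mk ν * (1 - 5*PowerSeries.X + 2*PowerSeries.X^2)
      = PowerSeries.mk ν
        - PowerSeries.C (R := ℚ) 5 * (PowerSeries.mk ν * PowerSeries.X)
        + PowerSeries.C (R := ℚ) 2 * (PowerSeries.mk ν * PowerSeries.X * PowerSeries.X) := by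
    rw [h5, h2']; ring
  have hrhs : (1 - 2*PowerSeries.X : PowerSeries ℚ)
      = 1 - PowerSeries.C (R := ℚ) 2 * PowerSeries.X := by rw [h2']
  rw [hmul, hrhs]
  ext n
  rcases n with _ | _ | n
  · simp [PowerSeries.coeff_zero_eq_constantCoeff, map_sub, map_add, map_mul, hν0]
  · simp only [map_sub, map_add, PowerSeries.coeff_C_mul, PowerSeries.coeff_succ_mul_X,
      PowerSeries.coeff_mk, PowerSeries.coeff_one, PowerSeries.coeff_X]
    simp [PowerSeries.coeff_zero_eq_constantCoeff, map_mul, hν0, hν1]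
    norm_num
  · have hr := hrec n
    simp only [map_sub, map_add, PowerSeries.coeff_C_mul, PowerSeries.coeff_succ_mul_X,
      PowerSeries.coeff_mk, PowerSeries.coeff_one, PowerSeries.coeff_X]
    simp only [Nat.succ_ne_zero, if_false]
    norm_num
    linarith
end

section
/- For every n ≥ 0, ν(n+1) = 3ν(n) + 4ν¹(n) and ν¹(n+1) = ν(n) + 2ν¹(n), where ν(n) = CT_x F_n(x)F_n(x^{-1}) and ν¹(n) = CT_x F_n(x)F_n(x^{-1})x^{2^n}. -/
open LaurentPolynomial

private lemma coeff_mul_T (p : LaurentPolynomial ℤ) (t m : ℤ) :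
    (p * T t : LaurentPolynomial ℤ).coeff m = p.coeff (m - t) := by
  simpa [sub_eq_add_neg] using AddMonoidAlgebra.coeff_mul_single_apply p 1 t m

private lemma coeff_add (p q : LaurentPolynomial ℤ) (m : ℤ) :
    (p + q : LaurentPolynomial ℤ).coeff m = p.coeff m + q.coeff m := rfl

private lemma aux_bound (n : ℕ) (k : ℤ)
    (h : (∏ i ∈ Finset.range n,
      (1 + T (2 ^ i : ℕ) + T (2 ^ (i + 1) : ℕ)) : LaurentPolynomial ℤ).coeff k ≠ 0) :
    0 ≤ k ∧ k ≤ 2 ^ (n + 1) - 2 := by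
  induction n generalizing k with
  | zero =>
    simp only [Finset.range_zero, Finset.prod_empty] at h
    rw [AddMonoidAlgebra.one_def, AddMonoidAlgebra.coeff_single, Finsupp.single_apply] at h
    have hk : k = 0 := by by_contra hc; simp [Ne.symm hc] at h
    subst hk; norm_num
  | succ n ih =>
    rw [Finset.prod_range_succ] at h
    have hmem : k ∈ ((∏ i ∈ Finset.range n,
        (1 + T (2 ^ i : ℕ) + T (2 ^ (i + 1) : ℕ)) : LaurentPolynomial ℤ) *
        (1 + T (2 ^ n : ℕ) + T (2 ^ (n + 1) : ℕ))).coeff.support :=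
      Finsupp.mem_support_iff.2 h
    obtain ⟨p, hp, q, hq, hpq⟩ := Finset.mem_add.1 (AddMonoidAlgebra.support_coeff_mul_subset _ _ hmem)
    have hP := ih p (Finsupp.mem_support_iff.1 hp)
    have hQ : q = 0 ∨ q = ((2 ^ n : ℕ) : ℤ) ∨ q = ((2 ^ (n + 1) : ℕ) : ℤ) := by
      by_contra hc
      push_neg at hc
      obtain ⟨h0, h1, h2⟩ := hc
      apply Finsupp.mem_support_iff.1 hq
      show ((1 + T (2 ^ n : ℕ) + T (2 ^ (n + 1) : ℕ) : LaurentPolynomial ℤ)).coeff q = 0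
      rw [coeff_add, coeff_add, AddMonoidAlgebra.one_def]
      show Finsupp.single 0 1 q + Finsupp.single ((2 ^ n : ℕ) : ℤ) 1 q
          + Finsupp.single ((2 ^ (n + 1) : ℕ) : ℤ) 1 q = 0
      rw [Finsupp.single_apply, Finsupp.single_apply, Finsupp.single_apply]
      rw [if_neg (Ne.symm h0), if_neg (Ne.symm h1), if_neg (Ne.symm h2)]
      norm_num
    have hpow : ((2 ^ n : ℕ) : ℤ) = 2 ^ n := by push_cast; ring
    have hpow1 : ((2 ^ (n + 1) : ℕ) : ℤ) = 2 * 2 ^ n := by push_cast; ring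
    have hp2 : (2 : ℤ) ^ (n + 1) - 2 = 2 * 2 ^ n - 2 := by ring
    have hp3 : (2 : ℤ) ^ (n + 1 + 1) - 2 = 4 * 2 ^ n - 2 := by ring
    have hpos : (0 : ℤ) < 2 ^ n := by positivity
    rw [hp2] at hP
    rw [hp3]
    rcases hQ with h | h | h <;> rw [h] at hpq <;> subst hpq <;>
      simp only [hpow, hpow1] at * <;> constructor <;> linarith [hP.1, hP.2]

open LaurentPolynomial in
theorem stmt_8 (F : ℕ → LaurentPolynomial ℤ) (ν ν₁ : ℕ → ℤ)
    (hF : ∀ n, F n = ∏ i ∈ Finset.range n,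
      (1 + T (2 ^ i : ℕ) + T (2 ^ (i + 1) : ℕ)))
    (hν : ∀ n, ν n = (F n * invert (F n)).coeff 0)
    (hν₁ : ∀ n, ν₁ n = ((F n * invert (F n) * T (2 ^ n : ℕ) : LaurentPolynomial ℤ)).coeff 0)
    (n : ℕ) :
    ν (n + 1) = 3 * ν n + 4 * ν₁ n ∧ ν₁ (n + 1) = ν n + 2 * ν₁ n := by
  set a : ℤ := 2 ^ n with ha
  have hpos : (0 : ℤ) < a := by positivity
  set G : LaurentPolynomial ℤ := F n * invert (F n) with hG
  -- symmetry of G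
  have hsym : ∀ k : ℤ, G.coeff (-k) = G.coeff k := by
    intro k
    have h1 : invert G = G := by
      rw [hG, map_mul, LaurentPolynomial.involutive_invert (F n), mul_comm]
    calc G.coeff (-k) = (invert G).coeff k := (LaurentPolynomial.invert_apply G k).symm
      _ = G.coeff k := by rw [h1]
  -- support bound for F n
  have hFb : ∀ k : ℤ, (F n).coeff k ≠ 0 → 0 ≤ k ∧ k ≤ 2 * a - 2 := by
    intro k hk
    rw [hF n] at hk
    have := aux_bound n k hk
    have : 0 ≤ k ∧ k ≤ 2 ^ (n + 1) - 2 := this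
    constructor
    · exact this.1
    · have : k ≤ 2 ^ (n + 1) - 2 := this.2
      have h2 : (2 : ℤ) ^ (n + 1) = 2 * a := by rw [ha]; ring
      linarith
  -- vanishing of G for large coefficients
  have hGzero : ∀ k : ℤ, 2 * a ≤ k → G.coeff k = 0 := by
    intro k hk
    by_contra h
    have hmem : k ∈ G.coeff.support := Finsupp.mem_support_iff.2 h
    rw [hG] at hmem
    obtain ⟨p, hp, q, hq, hpq⟩ := Finset.mem_add.1 (AddMonoidAlgebra.support_coeff_mul_subset _ _ hmem)
    have hP := hFb p (Finsupp.mem_support_iff.1 hp)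
    have hQne : (F n).coeff (-q) ≠ 0 := by
      have := Finsupp.mem_support_iff.1 hq
      rwa [LaurentPolynomial.invert_apply] at this
    have hQ := hFb (-q) hQne
    have : k = p + q := hpq.symm
    linarith [hP.1, hP.2, hQ.1, hQ.2]
  have hGzero' : ∀ k : ℤ, k ≤ -(2 * a) → G.coeff k = 0 := by
    intro k hk
    have := hGzero (-k) (by linarith)
    rw [← hsym (-k), neg_neg] at this
    exact this
  -- expand F (n + 1)
  have hcast1 : ((2 ^ n : ℕ) : ℤ) = a := by rw [ha]; push_cast; ring
  have hcast2 : ((2 ^ (n + 1) : ℕ) : ℤ) = 2 * a := by rw [ha]; push_cast; ring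
  have hFs : F (n + 1) = F n * (1 + T a + T (2 * a)) := by
    rw [hF (n + 1), Finset.prod_range_succ, ← hF n, hcast1, hcast2]
  -- general coefficient formula
  have hmulQ : ∀ (p : LaurentPolynomial ℤ) (m : ℤ),
      (p * (1 + T a + T (2 * a)) : LaurentPolynomial ℤ).coeff m = p.coeff m + p.coeff (m - a) + p.coeff (m - 2 * a) := by
    intro p.coeff m
    rw [mul_add, mul_add, mul_one, coeff_add, coeff_add, coeff_mul_T, coeff_mul_T]
  have hmulQ' : ∀ (p : LaurentPolynomial ℤ) (m : ℤ),
      (p * (1 + T (-a) + T (-(2 * a))) : LaurentPolynomial ℤ).coeff m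
        = p.coeff m + p.coeff (m + a) + p.coeff (m + 2 * a) := by
    intro p.coeff m
    rw [mul_add, mul_add, mul_one, coeff_add, coeff_add, coeff_mul_T, coeff_mul_T,
      sub_neg_eq_add, sub_neg_eq_add]
  have hinv : invert (F (n + 1)) = invert (F n) * (1 + T (-a) + T (-(2 * a))) := by
    rw [hFs, map_mul, map_add, map_add, map_one, LaurentPolynomial.invert_T,
      LaurentPolynomial.invert_T]
  have hprod : F (n + 1) * invert (F (n + 1))
      = (G * (1 + T a + T (2 * a))) * (1 + T (-a) + T (-(2 * a))) := by
    rw [hinv, hFs, hG]; ring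
  -- coefficient of the big product at any m
  have hbig : ∀ m : ℤ, (F (n + 1) * invert (F (n + 1))).coeff m
      = (G.coeff m + G.coeff (m - a) + G.coeff (m - 2 * a))
      + (G.coeff (m + a) + G.coeff (m + a - a) + G.coeff (m + a - 2 * a))
      + (G.coeff (m + 2 * a) + G.coeff (m + 2 * a - a) + G.coeff (m + 2 * a - 2 * a)) := by
    intro m
    rw [hprod, hmulQ', hmulQ, hmulQ, hmulQ]
  -- values of ν, ν₁
  have hν₁n : ν₁ n = G.coeff (-a) := by
    rw [hν₁ n, ← hG, coeff_mul_T, hcast1, zero_sub]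
  have hνn : ν n = G.coeff 0 := by rw [hν n, ← hG]
  have hGa : G.coeff a = ν₁ n := by rw [← hsym a]; exact hν₁n.symm
  constructor
  · rw [hν (n + 1), hbig 0]
    have e1 : G.coeff (0 - a) = ν₁ n := by
      rw [show (0 : ℤ) - a = -a by ring]; exact hν₁n.symm
    have e2 : G.coeff (0 - 2 * a) = 0 := hGzero' _ (by linarith)
    have e3 : G.coeff (0 + a) = ν₁ n := by rw [show (0 : ℤ) + a = a by ring]; exact hGa
    have e4 : G.coeff (0 + a - a) = ν n := by
      rw [show (0 : ℤ) + a - a = 0 by ring]; exact hνn.symm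
    have e5 : G.coeff (0 + a - 2 * a) = ν₁ n := by
      rw [show (0 : ℤ) + a - 2 * a = -a by ring]; exact hν₁n.symm
    have e6 : G.coeff (0 + 2 * a) = 0 := hGzero _ (by linarith)
    have e7 : G.coeff (0 + 2 * a - a) = ν₁ n := by
      rw [show (0 : ℤ) + 2 * a - a = a by ring]; exact hGa
    have e8 : G.coeff (0 + 2 * a - 2 * a) = ν n := by
      rw [show (0 : ℤ) + 2 * a - 2 * a = 0 by ring]; exact hνn.symm
    rw [e1, e2, e3, e4, e5, e6, e7, e8, ← hνn]
    ring
  · rw [hν₁ (n + 1), coeff_mul_T, hcast2, zero_sub, hbig (-(2 * a))]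
    have e1 : G.coeff (-(2 * a)) = 0 := hGzero' _ (by linarith)
    have e2 : G.coeff (-(2 * a) - a) = 0 := hGzero' _ (by linarith)
    have e3 : G.coeff (-(2 * a) - 2 * a) = 0 := hGzero' _ (by linarith)
    have e4 : G.coeff (-(2 * a) + a) = ν₁ n := by
      rw [show -(2 * a) + a = -a by ring]; exact hν₁n.symm
    have e5 : G.coeff (-(2 * a) + a - a) = 0 := by
      rw [show -(2 * a) + a - a = -(2 * a) by ring]; exact hGzero' _ (by linarith)
    have e6 : G.coeff (-(2 * a) + a - 2 * a) = 0 := hGzero' _ (by linarith)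
    have e7 : G.coeff (-(2 * a) + 2 * a) = ν n := by
      rw [show -(2 * a) + 2 * a = (0 : ℤ) by ring]; exact hνn.symm
    have e8 : G.coeff (-(2 * a) + 2 * a - a) = ν₁ n := by
      rw [show -(2 * a) + 2 * a - a = -a by ring]; exact hν₁n.symm
    have e9 : G.coeff (-(2 * a) + 2 * a - 2 * a) = 0 := hGzero' _ (by linarith)
    rw [e1, e2, e3, e4, e5, e6, e7, e8, e9]
    ring
end

section
/- Let M be the 2×2 integer matrix with rows (3,4) and (1,2), and let Γ(n) = M^n · (1,0)^t. Then the first component of Γ(n) equals ν(n), the sum of squares of the coefficients of F_n(x) = ∏_{i=0}^{n-1}(1 + x^{2^i} + x^{2^{i+1}}), for every n ≥ 0. -/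
open Polynomial

noncomputable def fP (n : ℕ) : ℤ[X] :=
  ∏ i ∈ Finset.range n, (1 + (X : ℤ[X]) ^ (2 ^ i) + X ^ (2 ^ (i + 1)))

noncomputable def gC (n : ℕ) (k : ℤ) : ℤ :=
  if 0 ≤ k then (fP n).coeff k.toNat else 0

noncomputable def TT (n : ℕ) (t : ℤ) : ℤ := ∑ᶠ k : ℤ, gC n k * gC n (k + t)

lemma fP_natDegree (n : ℕ) : (fP n).natDegree + 2 ≤ 2 ^ (n + 1) := by
  have h2 : ∀ m : ℕ, ∑ i ∈ Finset.range m, 2 ^ (i + 1) + 2 ≤ 2 ^ (m + 1) := by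
    intro m
    induction m with
    | zero => simp
    | succ m ih =>
      rw [Finset.sum_range_succ]
      have : (2:ℕ)^(m+2) = 2^(m+1) + 2^(m+1) := by ring
      linarith
  have h1 : (fP n).natDegree ≤ ∑ i ∈ Finset.range n, 2 ^ (i + 1) := by
    rw [fP]
    refine le_trans (Polynomial.natDegree_prod_le _ _) ?_
    refine Finset.sum_le_sum fun i _ => ?_
    refine le_trans (Polynomial.natDegree_add_le _ _) ?_
    simp only [max_le_iff, Polynomial.natDegree_X_pow, le_refl, and_true]
    refine le_trans (Polynomial.natDegree_add_le _ _) ?_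
    simp only [max_le_iff, Polynomial.natDegree_X_pow, Polynomial.natDegree_one]
    constructor
    · positivity
    · exact Nat.pow_le_pow_right (by norm_num) (by omega)
  linarith [h2 n]

lemma gC_eq_zero (n : ℕ) (k : ℤ) (h : (2:ℤ) ^ (n + 1) - 1 ≤ k) : gC n k = 0 := by
  have hc : ((2 ^ (n+1) : ℕ) : ℤ) = (2:ℤ) ^ (n+1) := by push_cast; ring
  have hdeg := fP_natDegree n
  have hk0 : 0 ≤ k := by
    have : (1:ℤ) ≤ (2:ℤ)^(n+1) := one_le_pow₀ (by norm_num)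
    linarith
  rw [gC, if_pos hk0]
  apply Polynomial.coeff_eq_zero_of_natDegree_lt
  have h' : ((2 ^ (n+1) : ℕ) : ℤ) - 1 ≤ k := by rw [hc]; exact h
  omega

lemma gC_supp (n : ℕ) : (Function.support (gC n)).Finite := by
  apply Set.Finite.subset (Set.finite_Icc (0:ℤ) (2 ^ (n+1)))
  intro k hk
  simp only [Function.mem_support] at hk
  simp only [Set.mem_Icc]
  constructor
  · by_contra h; exact hk (by rw [gC, if_neg h])
  · by_contra h
    push_neg at h
    exact hk (gC_eq_zero n k (by linarith))

lemma suppfl (n : ℕ) (u : ℤ → ℤ) (a b : ℤ)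
    (hu : ∀ k, u k = gC n (k + a) * gC n (k + b)) :
    (Function.support u).Finite := by
  have hsub : Function.support u ⊆ (fun k => k + a) ⁻¹' (Function.support (gC n)) := by
    intro k hk
    simp only [Function.mem_support] at hk
    simp only [Set.mem_preimage, Function.mem_support]
    intro h0; exact hk (by rw [hu, h0, zero_mul])
  refine Set.Finite.subset (Set.Finite.preimage ?_ (gC_supp n)) hsub
  exact Set.injOn_of_injective (add_left_injective a)

lemma finsum_add' {f g h : ℤ → ℤ} (hf : (Function.support f).Finite)
    (hg : (Function.support g).Finite) (hh : ∀ k, h k = f k + g k) :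
    (∑ᶠ k, h k) = (∑ᶠ k, f k) + ∑ᶠ k, g k := by
  rw [finsum_congr hh, finsum_add_distrib hf hg]

lemma supp_add {f g h : ℤ → ℤ} (hf : (Function.support f).Finite)
    (hg : (Function.support g).Finite) (hh : ∀ k, h k = f k + g k) :
    (Function.support h).Finite := by
  refine Set.Finite.subset (hf.union hg) ?_
  intro k hk
  simp only [Function.mem_support, hh] at hk
  by_contra hcon
  simp only [Set.mem_union, Function.mem_support, not_or, not_not] at hcon
  exact hk (by rw [hcon.1, hcon.2, add_zero])

lemma atomg (n : ℕ) (u : ℤ → ℤ) (a b t : ℤ)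
    (hu : ∀ k, u k = gC n (k + a) * gC n (k + b)) (ht : a + t = b) :
    (∑ᶠ k, u k) = TT n t := by
  have h1 : ∀ k : ℤ, u k = (fun j => gC n j * gC n (j + t)) ((Equiv.addRight a) k) := by
    intro k
    rw [hu]
    simp only [Equiv.coe_addRight]
    congr 2
    omega
  rw [finsum_congr h1]
  exact (finsum_comp_equiv (f := fun j => gC n j * gC n (j + t)) (Equiv.addRight a)).trans rfl

lemma TT_zero (n : ℕ) (t : ℤ) (h : (2:ℤ) ^ (n + 1) - 1 ≤ t) : TT n t = 0 := by
  have h1 : ∀ k : ℤ, gC n k * gC n (k + t) = 0 := by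
    intro k
    by_cases h0 : 0 ≤ k
    · rw [gC_eq_zero n (k + t) (by linarith), mul_zero]
    · rw [gC, if_neg h0, zero_mul]
  rw [TT, finsum_congr h1, finsum_zero]

lemma TT_def (n : ℕ) (t : ℤ) : TT n t = ∑ᶠ k : ℤ, gC n k * gC n (k + t) := rfl

lemma fP_succ (n : ℕ) :
    fP (n + 1) = fP n + fP n * X ^ (2 ^ n) + fP n * X ^ (2 ^ (n + 1)) := by
  rw [fP, Finset.prod_range_succ, ← fP]
  ring

lemma shift_coeff (n : ℕ) (c : ℕ) (k : ℤ) (h0 : 0 ≤ k) :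
    (if c ≤ k.toNat then (fP n).coeff (k.toNat - c) else 0) = gC n (k - (c : ℤ)) := by
  by_cases h : (c : ℤ) ≤ k
  · rw [if_pos (by omega), gC, if_pos (by omega)]
    congr 1
    omega
  · rw [if_neg (by omega), gC, if_neg (by omega)]

lemma grec (n : ℕ) (k : ℤ) :
    gC (n + 1) k = gC n (k - 0) + gC n (k - 2 ^ n) + gC n (k - 2 ^ (n + 1)) := by
  have hc : ∀ m : ℕ, ((2 ^ m : ℕ) : ℤ) = (2 : ℤ) ^ m := fun m => by push_cast; ring
  by_cases h0 : 0 ≤ k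
  · conv_lhs => rw [gC, if_pos h0, fP_succ]
    rw [Polynomial.coeff_add, Polynomial.coeff_add, Polynomial.coeff_mul_X_pow',
      Polynomial.coeff_mul_X_pow', shift_coeff n _ k h0, shift_coeff n _ k h0, hc n, hc (n + 1)]
    rw [sub_zero]
    conv_rhs => rw [gC, if_pos h0]
  · have hp1 : (0:ℤ) < 2 ^ n := by positivity
    have hp2 : (0:ℤ) < 2 ^ (n + 1) := by positivity
    rw [gC, if_neg h0, gC, if_neg (by omega : ¬ (0:ℤ) ≤ k - 0),
      gC, if_neg (by linarith : ¬ (0:ℤ) ≤ k - 2 ^ n),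
      gC, if_neg (by linarith : ¬ (0:ℤ) ≤ k - 2 ^ (n + 1))]
    ring

lemma suppgen (n : ℕ) (a : ℤ) (v : ℤ → ℤ) :
    (Function.support fun k => gC n (k - a) * v k).Finite := by
  have hsub : (Function.support fun k => gC n (k - a) * v k)
      ⊆ (fun k => k - a) ⁻¹' (Function.support (gC n)) := by
    intro k hk
    simp only [Function.mem_support] at hk
    simp only [Set.mem_preimage, Function.mem_support]
    intro h0; exact hk (by rw [h0, zero_mul])
  refine Set.Finite.subset (Set.Finite.preimage ?_ (gC_supp n)) hsub
  exact Set.injOn_of_injective (fun x y h => by omega)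

lemma atom2 (n : ℕ) (a b s : ℤ) :
    (∑ᶠ k : ℤ, gC n (k - a) * gC n (k + s - b)) = TT n (s + a - b) := by
  have h1 : ∀ k : ℤ, gC n (k - a) * gC n (k + s - b)
      = (fun j => gC n j * gC n (j + (s + a - b))) ((Equiv.subRight a) k) := by
    intro k
    simp only [Equiv.subRight_apply]
    congr 2
    ring
  rw [finsum_congr h1]
  exact (finsum_comp_equiv (f := fun j => gC n j * gC n (j + (s + a - b)))
    (Equiv.subRight a)).trans rfl

lemma Texp (n : ℕ) (s : ℤ) : TT (n + 1) s =
    ((TT n (s + 0 - 0) + TT n (s + 0 - 2 ^ n) + TT n (s + 0 - 2 ^ (n + 1))) +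
     (TT n (s + 2 ^ n - 0) + TT n (s + 2 ^ n - 2 ^ n) + TT n (s + 2 ^ n - 2 ^ (n + 1)))) +
     (TT n (s + 2 ^ (n + 1) - 0) + TT n (s + 2 ^ (n + 1) - 2 ^ n) +
      TT n (s + 2 ^ (n + 1) - 2 ^ (n + 1))) := by
  have key : ∀ k : ℤ, gC (n + 1) k * gC (n + 1) (k + s) =
      ((gC n (k - 0) * gC n (k + s - 0) + gC n (k - 0) * gC n (k + s - 2 ^ n)
          + gC n (k - 0) * gC n (k + s - 2 ^ (n + 1))) +
       (gC n (k - 2 ^ n) * gC n (k + s - 0) + gC n (k - 2 ^ n) * gC n (k + s - 2 ^ n)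
          + gC n (k - 2 ^ n) * gC n (k + s - 2 ^ (n + 1)))) +
      (gC n (k - 2 ^ (n + 1)) * gC n (k + s - 0)
          + gC n (k - 2 ^ (n + 1)) * gC n (k + s - 2 ^ n)
          + gC n (k - 2 ^ (n + 1)) * gC n (k + s - 2 ^ (n + 1))) := by
    intro k
    rw [grec n k, grec n (k + s)]
    ring
  have fin : ∀ a b : ℤ, (Function.support fun k => gC n (k - a) * gC n (k + s - b)).Finite :=
    fun a b => suppgen n a _
  have finrow : ∀ a : ℤ, (Function.support fun k =>
      gC n (k - a) * gC n (k + s - 0) + gC n (k - a) * gC n (k + s - 2 ^ n)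
        + gC n (k - a) * gC n (k + s - 2 ^ (n + 1))).Finite :=
    fun a => supp_add (supp_add (fin a 0) (fin a (2 ^ n)) (fun k => rfl))
      (fin a (2 ^ (n + 1))) (fun k => rfl)
  have hrow : ∀ a : ℤ, (∑ᶠ k : ℤ, (gC n (k - a) * gC n (k + s - 0)
        + gC n (k - a) * gC n (k + s - 2 ^ n)
        + gC n (k - a) * gC n (k + s - 2 ^ (n + 1))))
      = TT n (s + a - 0) + TT n (s + a - 2 ^ n) + TT n (s + a - 2 ^ (n + 1)) := by
    intro a
    rw [finsum_add' (supp_add (fin a 0) (fin a (2 ^ n)) (fun k => rfl))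
        (fin a (2 ^ (n + 1))) (fun k => rfl),
      finsum_add' (fin a 0) (fin a (2 ^ n)) (fun k => rfl), atom2, atom2, atom2]
  rw [TT_def, finsum_congr key,
    finsum_add' (supp_add (finrow 0) (finrow (2 ^ n)) (fun k => rfl))
      (finrow (2 ^ (n + 1))) (fun k => rfl),
    finsum_add' (finrow 0) (finrow (2 ^ n)) (fun k => rfl), hrow, hrow, hrow]

lemma TT_neg (n : ℕ) (t : ℤ) : TT n (-t) = TT n t := by
  have h1 := atom2 n 0 t 0
  have h2 := atom2 n t 0 0
  rw [show (0:ℤ) + 0 - t = -t by ring] at h1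
  rw [show (0:ℤ) + t - 0 = t by ring] at h2
  rw [← h1, ← h2]
  refine finsum_congr fun k => ?_
  simp only [sub_zero, add_zero]
  exact mul_comm _ _

lemma pow_bound (n : ℕ) : (2:ℤ) ^ (n + 1) - 1 ≤ 2 ^ (n + 1) := by linarith

lemma TrecA (n : ℕ) : TT (n + 1) 0 = 3 * TT n 0 + 4 * TT n (2 ^ n) := by
  have hp : (0:ℤ) < 2 ^ n := by positivity
  rw [Texp n 0,
    show (0:ℤ) + 0 - 0 = 0 by ring,
    show (0:ℤ) + 0 - 2 ^ n = -(2 ^ n) by ring,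
    show (0:ℤ) + 0 - 2 ^ (n + 1) = -(2 ^ (n + 1)) by ring,
    show (0:ℤ) + 2 ^ n - 0 = 2 ^ n by ring,
    show (0:ℤ) + 2 ^ n - 2 ^ n = 0 by ring,
    show (0:ℤ) + 2 ^ n - 2 ^ (n + 1) = -(2 ^ n) by ring,
    show (0:ℤ) + 2 ^ (n + 1) - 0 = 2 ^ (n + 1) by ring,
    show (0:ℤ) + 2 ^ (n + 1) - 2 ^ n = 2 ^ n by ring,
    show (0:ℤ) + 2 ^ (n + 1) - 2 ^ (n + 1) = 0 by ring,
    TT_neg, TT_neg, TT_zero n (2 ^ (n + 1)) (pow_bound n)]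
  ring

lemma TrecB (n : ℕ) : TT (n + 1) (2 ^ (n + 1)) = TT n 0 + 2 * TT n (2 ^ n) := by
  have hp : (0:ℤ) < 2 ^ n := by positivity
  have h2 : (2:ℤ) ^ (n + 1) = 2 * 2 ^ n := by ring
  rw [Texp n (2 ^ (n + 1)),
    show (2:ℤ) ^ (n + 1) + 0 - 0 = 2 ^ (n + 1) by ring,
    show (2:ℤ) ^ (n + 1) + 0 - 2 ^ n = 2 ^ n by ring,
    show (2:ℤ) ^ (n + 1) + 0 - 2 ^ (n + 1) = 0 by ring,
    show (2:ℤ) ^ (n + 1) + 2 ^ n - 0 = 2 ^ (n + 1) + 2 ^ n by ring,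
    show (2:ℤ) ^ (n + 1) + 2 ^ n - 2 ^ n = 2 ^ (n + 1) by ring,
    show (2:ℤ) ^ (n + 1) + 2 ^ n - 2 ^ (n + 1) = 2 ^ n by ring,
    show (2:ℤ) ^ (n + 1) + 2 ^ (n + 1) - 0 = 2 ^ (n + 1) + 2 ^ (n + 1) by ring,
    show (2:ℤ) ^ (n + 1) + 2 ^ (n + 1) - 2 ^ n = 2 ^ (n + 1) + 2 ^ n by ring,
    show (2:ℤ) ^ (n + 1) + 2 ^ (n + 1) - 2 ^ (n + 1) = 2 ^ (n + 1) by ring,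
    TT_zero n (2 ^ (n + 1)) (pow_bound n),
    TT_zero n (2 ^ (n + 1) + 2 ^ n) (by linarith),
    TT_zero n (2 ^ (n + 1) + 2 ^ (n + 1)) (by linarith)]
  ring

lemma fP_zero : fP 0 = 1 := by rw [fP]; simp

lemma TT0_0 : TT 0 0 = 1 := by
  rw [TT_def]
  rw [finsum_eq_single _ (0 : ℤ) ?h]
  · simp [gC, fP_zero]
  · intro x hx
    by_cases h0 : 0 ≤ x
    · have : x.toNat ≠ 0 := by omega
      rw [gC, if_pos h0, fP_zero, Polynomial.coeff_one, if_neg this, zero_mul]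
    · rw [gC, if_neg h0, zero_mul]

lemma TT0_1 : TT 0 1 = 0 := by
  rw [TT_def]
  have h1 : ∀ k : ℤ, gC 0 k * gC 0 (k + 1) = 0 := by
    intro k
    by_cases h0 : 0 ≤ k
    · have h2 : gC 0 (k + 1) = 0 := by
        have : (k + 1).toNat ≠ 0 := by omega
        rw [gC, if_pos (by omega : (0:ℤ) ≤ k + 1), fP_zero, Polynomial.coeff_one, if_neg this]
      rw [h2, mul_zero]
    · rw [gC, if_neg h0, zero_mul]
  rw [finsum_congr h1, finsum_zero]

lemma gC_cast (n : ℕ) (m : ℕ) : gC n (m : ℤ) = (fP n).coeff m := by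
  rw [gC, if_pos (Int.natCast_nonneg m)]
  congr 1

lemma TT_nu (n : ℕ) : TT n 0 = ∑ k ∈ (fP n).support, ((fP n).coeff k) ^ 2 := by
  classical
  have h1 : ∀ k : ℤ, gC n k * gC n (k + 0) = gC n k * gC n k := fun k => by rw [add_zero]
  rw [TT_def, finsum_congr h1]
  have hsub : (Function.support fun k : ℤ => gC n k * gC n k) ⊆
      ((fP n).support.map ⟨Nat.cast, Nat.cast_injective⟩ : Finset ℤ) := by
    intro k hk
    simp only [Function.mem_support] at hk
    have hg : gC n k ≠ 0 := fun h => hk (by rw [h, zero_mul])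
    have h0 : 0 ≤ k := by
      by_contra h
      exact hg (by rw [gC, if_neg h])
    have hc : (fP n).coeff k.toNat ≠ 0 := by
      intro h
      exact hg (by rw [gC, if_pos h0, h])
    simp only [Finset.coe_map, Set.mem_image, Finset.mem_coe, Polynomial.mem_support_iff,
      Function.Embedding.coeFn_mk]
    exact ⟨k.toNat, hc, by omega⟩
  rw [finsum_eq_finset_sum_of_support_subset _ hsub, Finset.sum_map]
  refine Finset.sum_congr rfl fun m _ => ?_
  simp only [Function.Embedding.coeFn_mk, gC_cast]
  ring

open Polynomial in
theorem stmt_19 (F : ℕ → ℤ[X]) (ν : ℕ → ℤ) (M : Matrix (Fin 2) (Fin 2) ℤ)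
    (hF : ∀ n, F n = ∏ i ∈ Finset.range n, (1 + (X : ℤ[X]) ^ (2 ^ i) + X ^ (2 ^ (i + 1))))
    (hν : ∀ n, ν n = ∑ k ∈ (F n).support, ((F n).coeff k) ^ 2)
    (hM : M = !![3, 4; 1, 2]) (n : ℕ) :
    (M ^ n).mulVec ![1, 0] 0 = ν n := by
  subst hM
  have step : ∀ w : Fin 2 → ℤ,
      (!![3, 4; 1, 2] : Matrix (Fin 2) (Fin 2) ℤ).mulVec w
        = ![3 * w 0 + 4 * w 1, w 0 + 2 * w 1] := by
    intro w
    funext i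
    fin_cases i <;>
      simp [Matrix.mulVec, dotProduct, Fin.sum_univ_two]
  have key : ∀ m : ℕ,
      ((!![3, 4; 1, 2] : Matrix (Fin 2) (Fin 2) ℤ) ^ m).mulVec ![1, 0] 0 = TT m 0 ∧
      ((!![3, 4; 1, 2] : Matrix (Fin 2) (Fin 2) ℤ) ^ m).mulVec ![1, 0] 1 = TT m ((2:ℤ) ^ m) := by
    intro m
    induction m with
    | zero =>
      constructor <;> simp [TT0_0, pow_zero, TT0_1]
    | succ m ih =>
      have hp : (!![3, 4; 1, 2] : Matrix (Fin 2) (Fin 2) ℤ) ^ (m + 1)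
          = !![3, 4; 1, 2] * (!![3, 4; 1, 2] : Matrix (Fin 2) (Fin 2) ℤ) ^ m := pow_succ' _ _
      rw [hp, ← Matrix.mulVec_mulVec, step]
      constructor
      · show 3 * _ + 4 * _ = _
        rw [ih.1, ih.2, TrecA]
      · show _ + 2 * _ = _
        rw [ih.1, ih.2, TrecB]
  rw [(key n).1, hν n, hF n]
  have hfp : (∏ i ∈ Finset.range n, (1 + (X : ℤ[X]) ^ (2 ^ i) + X ^ (2 ^ (i + 1)))) = fP n :=
    rfl
  rw [hfp]
  exact TT_nu n
end
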